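/- Let G be a group acting on a topological space X by homeomorphisms, and let U ⊆ X be an open subset with ⋃_{g ∈ G} g • U = X. Suppose X and U are path-connected and X is simply connected. Set S = {g ∈ G | (g • U) ∩ U ≠ ∅}, and let φ : F(S) → G be the homomorphism from the free group on the set S sending each generator to the corresponding element of G. Then φ is surjective and its kernel is the normal closure of the set R = { a_{s₁}·a_{s₂}·a_{s₃}^{-1} | s₁, s₂, s₃ ∈ S, U ∩ (s₁ • U) ∩ (s₃ • U) ≠ ∅, and s₁s₂ = s₃ in G }, where a_s denotes the free generator indexed by s ∈ S. -/

import Mathlib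

open Pointwise

set_option linter.unusedSectionVars false
set_option maxHeartbeats 1600000

open Pointwise Set

namespace Stmt1Aux

noncomputable section
open Classical

variable {G X : Type*} [Group G] [TopologicalSpace X] [MulAction G X]
variable (U : Set X) (S : Set G)

def Rel : Set (FreeGroup S) :=
  {w : FreeGroup S | ∃ s₁ s₂ s₃ : S,
    U ∩ ((s₁ : G) • U) ∩ ((s₃ : G) • U) ≠ ∅ ∧
    (s₁ : G) * (s₂ : G) = (s₃ : G) ∧
    w = FreeGroup.of s₁ * FreeGroup.of s₂ * (FreeGroup.of s₃)⁻¹}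

def NN : Subgroup (FreeGroup S) := Subgroup.normalClosure (Rel U S)

instance : (NN U S).Normal := Subgroup.normalClosure_normal

abbrev Q := FreeGroup S ⧸ NN U S

def qm : FreeGroup S →* Q U S := QuotientGroup.mk' _

def e (p q : G) : Q U S :=
  if h : p⁻¹ * q ∈ S then qm U S (FreeGroup.of ⟨p⁻¹ * q, h⟩) else 1

def W (c : ℕ → G) : ℕ → Q U S
  | 0 => 1
  | (k+1) => W c k * e U S (c k) (c (k+1))

def pad (c : ℕ → G) (k : ℕ) (i : ℕ) : G := if 1 ≤ i ∧ i ≤ k then c (i-1) else 1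

def word (c : ℕ → G) (k : ℕ) : Q U S := W U S (pad c k) (k+1)

theorem pad_pos (c : ℕ → G) (k i : ℕ) (h1 : 1 ≤ i) (h2 : i ≤ k) : pad c k i = c (i-1) := by
  unfold pad; rw [if_pos ⟨h1, h2⟩]

theorem pad_neg (c : ℕ → G) (k i : ℕ) (h : ¬(1 ≤ i ∧ i ≤ k)) : pad c k i = 1 := by
  unfold pad; rw [if_neg h]

def IsChain (f : ℝ → X) (k : ℕ) (c : ℕ → G) : Prop :=
  ∀ i < k, ∀ x : ℝ, (i : ℝ) ≤ x → x ≤ (i : ℝ) + 1 → f (x / k) ∈ c i • U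

variable {U S}

section basic
variable (hS : S = {g : G | (g • U) ∩ U ≠ ∅})
include hS

theorem mem_S {p q : G} {x : X} (hx : x ∈ p • U) (hy : x ∈ q • U) : p⁻¹ * q ∈ S := by
  rw [hS]
  refine Set.nonempty_iff_ne_empty.mp ⟨p⁻¹ • x, ?_, ?_⟩
  · rw [mem_smul_set_iff_inv_smul_mem] at hy ⊢
    simpa [smul_smul, mul_inv_rev, mul_assoc] using hy
  · rwa [mem_smul_set_iff_inv_smul_mem] at hx

theorem rel_basic {s₁ s₂ s₃ : S} (h : (U ∩ (s₁ : G) • U ∩ (s₃ : G) • U).Nonempty)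
    (hmul : (s₁ : G) * (s₂ : G) = (s₃ : G)) :
    qm U S (FreeGroup.of s₁) * qm U S (FreeGroup.of s₂) = qm U S (FreeGroup.of s₃) := by
  have hmem : FreeGroup.of s₁ * FreeGroup.of s₂ * (FreeGroup.of s₃)⁻¹ ∈ NN U S :=
    Subgroup.subset_normalClosure
      ⟨s₁, s₂, s₃, Set.nonempty_iff_ne_empty.mp h, hmul, rfl⟩
  have h1 : qm U S (FreeGroup.of s₁ * FreeGroup.of s₂ * (FreeGroup.of s₃)⁻¹) = 1 := by
    rwa [qm, QuotientGroup.mk'_apply, QuotientGroup.eq_one_iff]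
  rw [map_mul, map_mul, map_inv] at h1
  exact mul_inv_eq_one.mp h1

theorem e_mul {p q r : G} {x : X} (hx1 : x ∈ p • U) (hx2 : x ∈ q • U) (hx3 : x ∈ r • U) :
    e U S p q * e U S q r = e U S p r := by
  have h1 : p⁻¹ * q ∈ S := mem_S hS hx1 hx2
  have h2 : q⁻¹ * r ∈ S := mem_S hS hx2 hx3
  have h3 : p⁻¹ * r ∈ S := mem_S hS hx1 hx3
  rw [e, e, e, dif_pos h1, dif_pos h2, dif_pos h3]
  refine rel_basic hS ?_ ?_
  · refine ⟨p⁻¹ • x, ⟨?_, ?_⟩, ?_⟩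
    · rwa [← mem_smul_set_iff_inv_smul_mem]
    · show p⁻¹ • x ∈ (p⁻¹ * q) • U
      rw [mem_smul_set_iff_inv_smul_mem] at hx2 ⊢
      simpa [smul_smul, mul_inv_rev, mul_assoc] using hx2
    · show p⁻¹ • x ∈ (p⁻¹ * r) • U
      rw [mem_smul_set_iff_inv_smul_mem] at hx3 ⊢
      simpa [smul_smul, mul_inv_rev, mul_assoc] using hx3
  · show (p⁻¹ * q) * (q⁻¹ * r) = p⁻¹ * r
    group

theorem e_self (hU : U.Nonempty) (p : G) : e U S p p = 1 := by
  obtain ⟨u, hu⟩ := hU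
  have hx : p • u ∈ p • U := Set.smul_mem_smul_set hu
  have := e_mul hS hx hx hx
  exact (mul_eq_left.mp this)

end basic

theorem W_succ (c : ℕ → G) (k : ℕ) : W U S c (k+1) = W U S c k * e U S (c k) (c (k+1)) := rfl

theorem W_congr {c d : ℕ → G} (k : ℕ) (h : ∀ i ≤ k, c i = d i) : W U S c k = W U S d k := by
  induction k with
  | zero => rfl
  | succ k ih =>
    rw [W_succ, W_succ, ih (fun i hi => h i (Nat.le_succ_of_le hi)),
      h k (Nat.le_succ _), h (k+1) le_rfl]

theorem W_append (c : ℕ → G) (a b : ℕ) :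
    W U S c (a + b) = W U S c a * W U S (fun i => c (a + i)) b := by
  induction b with
  | zero => simp [W]
  | succ b ih =>
    rw [← Nat.add_assoc, W_succ, ih, W_succ, mul_assoc]
    rfl

theorem W_cons (c : ℕ → G) (k : ℕ) :
    W U S c (k + 1) = e U S (c 0) (c 1) * W U S (fun i => c (i + 1)) k := by
  induction k with
  | zero => simp [W]
  | succ k ih =>
    rw [W_succ, ih, mul_assoc, ← W_succ]

theorem W_one (hS : S = {g : G | (g • U) ∩ U ≠ ∅}) (hU : U.Nonempty) (k : ℕ) :
    W U S (fun _ => (1 : G)) k = 1 := by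
  induction k with
  | zero => rfl
  | succ k ih => rw [W_succ, ih, e_self hS hU, one_mul]

theorem W_const (hS : S = {g : G | (g • U) ∩ U ≠ ∅}) (hU : U.Nonempty)
    {d : ℕ → G} {L : ℕ} (hL : 1 ≤ L) (hd : ∀ i < L, d i = d 0) :
    W U S d L = e U S (d 0) (d L) := by
  induction L with
  | zero => omega
  | succ L ih =>
    rcases Nat.eq_or_lt_of_le hL with h1 | h1
    · rw [← h1]; simp [W]
    · have hL' : 1 ≤ L := by omega
      rw [W_succ, ih hL' (fun i hi => hd i (Nat.lt_succ_of_lt hi)), hd L (Nat.lt_succ_self _)]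
      obtain ⟨u, hu⟩ := hU
      have hx : d 0 • u ∈ d 0 • U := Set.smul_mem_smul_set hu
      -- e (d0) (d0) * e (d0) (d (L+1)) : cannot use e_mul directly since d (L+1) unknown
      rw [e_self hS ⟨u, hu⟩, one_mul]


section comb
variable (hS : S = {g : G | (g • U) ∩ U ≠ ∅})
include hS

theorem rows_eq (c d : ℕ → G) (K : ℕ) (w : ℕ → X) (h0 : c 0 = d 0) (hK : c K = d K)
    (hw : ∀ i < K, w i ∈ c i • U ∧ w i ∈ c (i+1) • U ∧ w i ∈ d i • U ∧ w i ∈ d (i+1) • U) :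
    W U S c K = W U S d K := by
  rcases Nat.eq_zero_or_pos K with h | hpos
  · subst h; rfl
  have hU : U.Nonempty := by
    obtain ⟨h1, -⟩ := hw 0 hpos
    obtain ⟨y, hy, -⟩ := h1
    exact ⟨y, hy⟩
  have main : ∀ i ≤ K,
      W U S d K = W U S c i * e U S (c i) (d i) * W U S (fun t => d (i + t)) (K - i) := by
    intro i hi
    induction i with
    | zero =>
      have hWd : W U S (fun t => d (0 + t)) (K - 0) = W U S d K := by
        rw [Nat.sub_zero]
        exact W_congr _ (fun i _ => by rw [Nat.zero_add])
      rw [show W U S c 0 = 1 from rfl, h0, e_self hS hU, one_mul, one_mul, hWd]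
    | succ i ih =>
      have hiK : i < K := hi
      specialize ih (le_of_lt hiK)
      obtain ⟨m1, m2, m3, m4⟩ := hw i hiK
      have hsub : K - i = (K - (i+1)) + 1 := by omega
      have hWsh : W U S (fun t => d (i + t)) (K - i)
          = e U S (d i) (d (i+1)) * W U S (fun t => d (i + 1 + t)) (K - (i+1)) := by
        rw [hsub, W_cons]
        congr 1
        exact W_congr _ (fun t _ => by congr 1; omega)
      have h1 : e U S (c i) (d i) * e U S (d i) (d (i+1)) = e U S (c i) (d (i+1)) :=
        e_mul hS m1 m3 m4
      have h2 : e U S (c i) (c (i+1)) * e U S (c (i+1)) (d (i+1)) = e U S (c i) (d (i+1)) :=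
        e_mul hS m1 m2 m4
      rw [ih, hWsh, ← mul_assoc, mul_assoc (W U S c i), h1, ← h2, W_succ]
      group
  have hfin := main K le_rfl
  rw [Nat.sub_self, hK, e_self hS hU] at hfin
  simpa [W] using hfin.symm

theorem word_refine (hU : U.Nonempty) (c : ℕ → G) {k L : ℕ} (hk : 1 ≤ k) (hL : 1 ≤ L) :
    word U S c k = word U S (fun i => c (i / L)) (k * L) := by
  have hkL : 1 ≤ k * L := Nat.one_le_iff_ne_zero.mpr (by positivity)
  set P := pad c k with hP
  set P' := pad (fun i => c (i / L)) (k * L) with hP'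
  have hPv : ∀ i, 1 ≤ i → i ≤ k → P i = c (i - 1) := fun i h1 h2 => pad_pos c k i h1 h2
  have hPt : ∀ i, ¬(1 ≤ i ∧ i ≤ k) → P i = 1 := fun i h => pad_neg c k i h
  have hP'v : ∀ i, 1 ≤ i → i ≤ k * L → P' i = c ((i - 1) / L) :=
    fun i h1 h2 => pad_pos _ (k * L) i h1 h2
  have hP't : ∀ i, ¬(1 ≤ i ∧ i ≤ k * L) → P' i = 1 := fun i h => pad_neg _ (k * L) i h
  have claim : ∀ j ≤ k, W U S P' (j * L + 1) = W U S P (j + 1) := by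
    intro j hj
    induction j with
    | zero =>
      have e1 : P' 0 = P 0 := by rw [hPt 0 (by omega), hP't 0 (by omega)]
      have e2 : P' 1 = P 1 := by
        rw [hPv 1 le_rfl hk, hP'v 1 le_rfl hkL]
        simp [Nat.zero_div]
      simp only [Nat.zero_mul, Nat.zero_add]
      show W U S P' 0 * e U S (P' 0) (P' 1) = W U S P 0 * e U S (P 0) (P 1)
      rw [e1, e2, show W U S P' 0 = 1 from rfl, show W U S P 0 = 1 from rfl]
    | succ j ihj =>
      have hjk : j < k := hj
      specialize ihj (le_of_lt hjk)
      have hsplit : (j + 1) * L + 1 = (j * L + 1) + L := by ring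
      rw [hsplit, W_append, ihj]
      have hblock : ∀ t < L, P' (j * L + 1 + t) = c j := by
        intro t ht
        rw [hP'v _ (by omega) (by nlinarith)]
        congr 1
        have : j * L + 1 + t - 1 = t + j * L := by omega
        rw [this, Nat.add_mul_div_right _ _ (by omega : 0 < L), Nat.div_eq_of_lt ht,
          Nat.zero_add]
      have hconst : W U S (fun t => P' (j * L + 1 + t)) L
          = e U S (P' (j * L + 1)) (P' (j * L + 1 + L)) :=
        W_const hS hU hL (d := fun t => P' (j * L + 1 + t))
          (fun i hi => by rw [hblock i hi, hblock 0 (by omega)])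
      rw [hconst]
      have eA : P' (j * L + 1) = c j := hblock 0 (by omega)
      have eB : P (j + 1) = c j := by rw [hPv _ (by omega) (by omega)]; all_goals simp
      have eC : P' (j * L + 1 + L) = P (j + 2) := by
        rcases Nat.lt_or_ge (j+1) k with h | h
        · rw [hP'v _ (by omega) (by nlinarith), hPv _ (by omega) (by omega)]
          have h1 : j * L + 1 + L - 1 = (j + 1) * L := by
            have : (j + 1) * L = j * L + L := Nat.succ_mul j L
            omega
          rw [h1, Nat.mul_div_cancel _ (by omega : 0 < L)]
          all_goals simp
        · have hj1 : j + 1 = k := by omega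
          have hgt : ¬(1 ≤ j * L + 1 + L ∧ j * L + 1 + L ≤ k * L) := by
            rintro ⟨-, h2⟩
            have : (j + 1) * L = j * L + L := Nat.succ_mul j L
            have hk2 : k * L = j * L + L := by rw [← hj1] at *; omega
            omega
          rw [hP't _ hgt, hPt _ (by omega)]
      rw [eA, eC]
      have hfin : W U S P (j + 1 + 1) = W U S P (j + 1) * e U S (P (j + 1)) (P (j + 2)) := rfl
      rw [hfin, eB]
  have := claim k le_rfl
  rw [word, word, ← hP, ← hP', ← this]

theorem chain_key {f : ℝ → X} {k : ℕ} (hk : 1 ≤ k) {c : ℕ → G}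
    (hc : IsChain U f k c) (h0 : f 0 ∈ U) (h1 : f 1 ∈ U) :
    ∀ i ≤ k, f ((i : ℝ) / k) ∈ pad c k i • U ∧ f ((i : ℝ) / k) ∈ pad c k (i+1) • U := by
  intro i hi
  have hk0 : (k : ℝ) ≠ 0 := by positivity
  constructor
  · rcases Nat.eq_zero_or_pos i with h | h
    · subst h
      rw [pad_neg c k 0 (by omega), one_smul]
      simpa using h0
    · rw [pad_pos c k i h hi]
      have := hc (i - 1) (by omega) (i : ℝ) ?_ ?_
      · exact this
      · rw [Nat.cast_sub h]; simp
      · rw [Nat.cast_sub h]; simp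
  · rcases Nat.lt_or_ge i k with h | h
    · rw [pad_pos c k (i+1) (by omega) (by omega), Nat.add_sub_cancel]
      exact hc i h (i : ℝ) le_rfl (by linarith)
    · have hik : i = k := by omega
      rw [pad_neg c k (i+1) (by omega), one_smul, hik, div_self hk0]
      exact h1

theorem chain_refine {f : ℝ → X} {k L : ℕ} (hL : 1 ≤ L) {c : ℕ → G}
    (hc : IsChain U f k c) : IsChain U f (k * L) (fun i => c (i / L)) := by
  intro i hi x hx1 hx2
  have hL0 : (0:ℝ) < L := by exact_mod_cast hL
  have hdiv : i / L < k := Nat.div_lt_of_lt_mul (by rw [Nat.mul_comm]; omega : i < L * k)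
  have hb1 : (↑(i / L) : ℝ) ≤ x / L := by
    rw [le_div_iff₀ hL0]
    calc (↑(i / L) : ℝ) * L = ↑(i / L * L) := by push_cast; ring
    _ ≤ (i : ℝ) := by exact_mod_cast Nat.div_mul_le_self i L
    _ ≤ x := hx1
  have hb2 : x / L ≤ ↑(i / L) + 1 := by
    rw [div_le_iff₀ hL0]
    have hnat : i + 1 ≤ (i / L) * L + L := by
      have h1 := Nat.div_add_mod i L
      have h2 := Nat.mod_lt i (show 0 < L by omega)
      calc i + 1 = L * (i / L) + i % L + 1 := by rw [h1]
      _ ≤ L * (i / L) + L := by omega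
      _ = (i / L) * L + L := by ring
    calc x ≤ (i:ℝ) + 1 := hx2
    _ ≤ ↑((i / L) * L + L) := by exact_mod_cast hnat
    _ = (↑(i / L) + 1) * L := by push_cast; ring
  have key := hc (i / L) hdiv (x / L) hb1 hb2
  have hxx : x / ↑(k * L) = x / L / k := by
    rw [div_div]
    push_cast
    ring_nf
  rwa [hxx]

theorem chain_word_eq {f : ℝ → X} {k : ℕ} (hk : 1 ≤ k) {c d : ℕ → G}
    (hc : IsChain U f k c) (hd : IsChain U f k d) (h0 : f 0 ∈ U) (h1 : f 1 ∈ U) :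
    word U S c k = word U S d k := by
  refine rows_eq hS (pad c k) (pad d k) (k+1) (fun i => f ((i : ℝ) / k)) ?_ ?_ ?_
  · rw [pad_neg c k 0 (by omega), pad_neg d k 0 (by omega)]
  · rw [pad_neg c k (k+1) (by omega), pad_neg d k (k+1) (by omega)]
  · intro i hi
    obtain ⟨a1, a2⟩ := chain_key hS hk hc h0 h1 i (by omega)
    obtain ⟨b1, b2⟩ := chain_key hS hk hd h0 h1 i (by omega)
    exact ⟨a1, a2, b1, b2⟩

end comb


section cat
variable (X) in
def cat : ℕ → (ℕ → ℝ → X) → ℝ → X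
  | 0, p, x => p 0 x
  | (k+1), p, x => if x ≤ 1 then p 0 x else cat k (fun i => p (i+1)) (x - 1)

theorem cat_zero_eval (k : ℕ) (p : ℕ → ℝ → X) : cat X k p 0 = p 0 0 := by
  cases k <;> simp [cat]

theorem cat_continuous (k : ℕ) (p : ℕ → ℝ → X) (hp : ∀ i, Continuous (p i))
    (hm : ∀ j < k, p j 1 = p (j+1) 0) : Continuous (cat X k p) := by
  induction k generalizing p with
  | zero => exact hp 0
  | succ k ih =>
    show Continuous fun x => if x ≤ 1 then p 0 x else cat X k (fun i => p (i+1)) (x - 1)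
    refine Continuous.if_le (hp 0) ?_ continuous_id continuous_const ?_
    · exact (ih (fun i => p (i+1)) (fun i => hp (i+1))
        (fun j hj => hm (j+1) (by omega))).comp (continuous_id.sub continuous_const)
    · intro x hx
      subst hx
      rw [sub_self, cat_zero_eval]
      exact hm 0 (by omega)

theorem cat_eval (k : ℕ) (p : ℕ → ℝ → X) (hm : ∀ j < k, p j 1 = p (j+1) 0)
    (i : ℕ) (hi : i ≤ k) (x : ℝ) (hx1 : (i : ℝ) ≤ x) (hx2 : x ≤ (i : ℝ) + 1) :
    cat X k p x = p i (x - i) := by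
  induction k generalizing p i x with
  | zero =>
    interval_cases i
    simp [cat]
  | succ k ih =>
    show (if x ≤ 1 then p 0 x else cat X k (fun i => p (i+1)) (x - 1)) = p i (x - i)
    rcases Nat.eq_zero_or_pos i with h0 | h0
    · subst h0
      rw [if_pos (by simpa using hx2)]
      simp
    · obtain ⟨i, rfl⟩ : ∃ j, i = j + 1 := ⟨i - 1, by omega⟩
      by_cases hx : x ≤ 1
      · have hi0 : (i : ℕ) = 0 := by
          by_contra hne
          have : (1 : ℝ) ≤ (i : ℝ) := by exact_mod_cast Nat.one_le_iff_ne_zero.mpr hne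
          push_cast at hx1
          linarith
        subst hi0
        have hx1' : (1 : ℝ) ≤ x := by push_cast at hx1; linarith
        have hxe : x = 1 := le_antisymm hx hx1'
        rw [if_pos hx, hxe, hm 0 (by omega)]
        norm_num
      · rw [if_neg hx]
        have := ih (fun i => p (i+1)) (fun j hj => hm (j+1) (by omega)) i (by omega) (x - 1)
          (by push_cast at hx1 ⊢; linarith) (by push_cast at hx2 ⊢; linarith)
        rw [this]
        push_cast
        ring_nf

end cat

section geom
variable (hcont : ∀ g : G, Continuous fun x : X => g • x)
include hcont

theorem smul_isOpen (hUopen : IsOpen U) (g : G) : IsOpen (g • U) := by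
  have h : g • U = (fun x : X => g⁻¹ • x) ⁻¹' U := by
    ext x; simp [mem_smul_set_iff_inv_smul_mem]
  rw [h]
  exact hUopen.preimage (hcont g⁻¹)

theorem joinedIn_smul {a b : X} {g : G} (h : JoinedIn U a b) :
    JoinedIn (g • U) (g • a) (g • b) := by
  have := h.map (f := fun x : X => g • x) (hcont g)
  rwa [Set.image_smul] at this

end geom


theorem ker_le (hcont : ∀ g : G, Continuous fun x : X => g • x)
    (hUopen : IsOpen U) (hcover : ⋃ g : G, g • U = Set.univ)
    (hX : SimplyConnectedSpace X) (hUpc : IsPathConnected U)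
    (hS : S = {g : G | (g • U) ∩ U ≠ ∅})
    {w : FreeGroup S} (hw : FreeGroup.lift (fun s : S => (s : G)) w = 1) :
    w ∈ NN U S := by
  classical
  obtain ⟨u₀, hu₀, hUj⟩ := hUpc
  have hUne : U.Nonempty := ⟨u₀, hu₀⟩
  haveI := hX
  set l := w.toWord with hl
  set m := l.length with hm
  rcases Nat.eq_zero_or_pos m with hm0 | hm1
  · have hle : l = [] := List.length_eq_zero_iff.mp (by omega)
    have hw1 : w = FreeGroup.mk [] := by
      conv_lhs => rw [← FreeGroup.mk_toWord (x := w)]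
      rw [← hl, hle]
    rw [hw1, ← FreeGroup.one_eq_mk]
    exact Subgroup.one_mem _
  · -- letters and partial products
    have h1S : (1 : G) ∈ S := by
      rw [hS]
      show (1 : G) • U ∩ U ≠ ∅
      rw [one_smul, Set.inter_self]
      exact hUne.ne_empty
    have hSiff : ∀ g : G, g ∈ S ↔ (g • U) ∩ U ≠ ∅ := fun g => by rw [hS]; exact Iff.rfl
    have hSinv : ∀ s : G, s ∈ S → s⁻¹ ∈ S := by
      intro s hs
      rw [hSiff] at hs ⊢
      obtain ⟨x, hx1, hx2⟩ := Set.nonempty_iff_ne_empty.mpr hs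
      refine Set.nonempty_iff_ne_empty.mp ⟨s⁻¹ • x, ?_, ?_⟩
      · exact Set.smul_mem_smul_set hx2
      · rw [mem_smul_set_iff_inv_smul_mem] at hx1
        simpa using hx1
    set dflt : S × Bool := (⟨1, h1S⟩, true) with hdflt
    set tv : ℕ → G := fun i =>
      (bif (l.getD i dflt).2 then ((l.getD i dflt).1 : G) else (((l.getD i dflt).1 : G))⁻¹)
      with htv
    set gc : ℕ → G :=
      fun i => ((l.take i).map fun p => bif p.2 then (p.1 : G) else ((p.1 : G))⁻¹).prod with hgc
    have hgc0 : gc 0 = 1 := by simp [hgc]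
    have hgcm : gc m = 1 := by
      have h1 : gc m = FreeGroup.lift (fun s : S => (s : G)) w := by
        conv_rhs => rw [← FreeGroup.mk_toWord (x := w)]
        rw [FreeGroup.lift_mk, hgc]
        simp only
        rw [hm, List.take_length]
      rw [h1, hw]
    have hstep : ∀ j < m, gc (j+1) = gc j * tv j := by
      intro j hj
      have hjl : j < l.length := by omega
      show ((l.take (j+1)).map _).prod = ((l.take j).map _).prod * _
      rw [List.take_succ, List.map_append, List.prod_append]
      congr 1
      rw [List.getElem?_eq_getElem hjl]
      simp only [Option.toList_some, List.map_cons, List.map_nil, List.prod_cons,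
        List.prod_nil, mul_one]
      rw [htv]
      simp only
      rw [List.getD_eq_getElem l dflt hjl]
    have htvS : ∀ j, tv j ∈ S := by
      intro j
      rw [htv]
      simp only
      rcases l.getD j dflt with ⟨s, b⟩
      cases b
      · exact hSinv _ s.2
      · exact s.2
    -- quotient relations
    have hqmone : qm U S (FreeGroup.of (⟨1, h1S⟩ : S)) = 1 := by
      have h := rel_basic (U := U) hS (s₁ := ⟨1, h1S⟩) (s₂ := ⟨1, h1S⟩) (s₃ := ⟨1, h1S⟩)
        ⟨u₀, ⟨⟨hu₀, by simpa using hu₀⟩, by simpa using hu₀⟩⟩ (by simp)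
      exact mul_eq_left.mp h
    have hinv : ∀ (s : S), qm U S (FreeGroup.of (⟨(↑s)⁻¹, hSinv _ s.2⟩ : S))
        = (qm U S (FreeGroup.of s))⁻¹ := by
      intro s
      obtain ⟨x, hx1, hx2⟩ := Set.nonempty_iff_ne_empty.mpr ((hSiff _).mp s.2)
      have h := rel_basic (U := U) hS (s₁ := s) (s₂ := ⟨(↑s)⁻¹, hSinv _ s.2⟩)
        (s₃ := ⟨1, h1S⟩) ⟨x, ⟨⟨hx2, hx1⟩, by simpa using hx2⟩⟩ (by simp)
      rw [hqmone] at h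
      exact eq_inv_of_mul_eq_one_right h
    -- word computation
    have claim : ∀ j ≤ m, qm U S (FreeGroup.mk (l.take j)) = W U S (pad gc (m+1)) (j+1) := by
      intro j hj
      induction j with
      | zero =>
        rw [List.take_zero]
        have hL : FreeGroup.mk ([] : List (S × Bool)) = 1 := rfl
        rw [hL, map_one]
        show (1 : Q U S) = W U S (pad gc (m+1)) 0 * e U S (pad gc (m+1) 0) (pad gc (m+1) 1)
        rw [pad_neg _ _ 0 (by omega), pad_pos _ _ 1 le_rfl (by omega)]
        show (1 : Q U S) = 1 * e U S 1 (gc 0)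
        rw [hgc0, e_self hS hUne, one_mul]
      | succ j ihj =>
        have hjm : j < m := by omega
        have hjl : j < l.length := by omega
        rw [List.take_succ, ← FreeGroup.mul_mk, map_mul, ihj (by omega), W_succ]
        congr 1
        rw [pad_pos _ _ (j+1) (by omega) (by omega), pad_pos _ _ (j+2) (by omega) (by omega),
          show j + 1 - 1 = j from rfl, show j + 2 - 1 = j + 1 from rfl]
        have hv : (gc j)⁻¹ * gc (j+1) = tv j := by rw [hstep j hjm]; group
        have hvS : (gc j)⁻¹ * gc (j+1) ∈ S := hv ▸ htvS j
        rw [show e U S (gc j) (gc (j+1))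
            = qm U S (FreeGroup.of ⟨(gc j)⁻¹ * gc (j+1), hvS⟩) from dif_pos hvS]
        rw [List.getElem?_eq_getElem hjl]
        have hget : l.getD j dflt = l[j] := List.getD_eq_getElem l dflt hjl
        rcases hlj : l[j] with ⟨s, b⟩
        cases b
        · -- negative letter
          have hvv : (gc j)⁻¹ * gc (j+1) = (↑s)⁻¹ := by
            rw [hv, htv]; simp only; rw [hget, hlj]; simp
          have hsub : (⟨(gc j)⁻¹ * gc (j+1), hvS⟩ : S) = ⟨(↑s)⁻¹, hSinv _ s.2⟩ :=
            Subtype.ext hvv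
          rw [hsub, hinv s]
          have hmk : FreeGroup.mk ((s, false) :: []) = (FreeGroup.of s)⁻¹ := by
            rw [show ((s, false) :: [] : List (S × Bool)) = FreeGroup.invRev [(s, true)] from rfl,
              ← FreeGroup.inv_mk]
            rfl
          rw [show Option.toList (some (s, false)) = [(s, false)] from rfl, hmk, map_inv]
        · -- positive letter
          have hvv : (gc j)⁻¹ * gc (j+1) = (↑s : G) := by
            rw [hv, htv]; simp only; rw [hget, hlj]; simp
          have hsub : (⟨(gc j)⁻¹ * gc (j+1), hvS⟩ : S) = s := Subtype.ext hvv
          rw [hsub]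
          rfl
    have hqmw : qm U S w = word U S gc (m+1) := by
      have h1 := claim m le_rfl
      rw [hm, List.take_length, hl, FreeGroup.mk_toWord] at h1
      rw [word, W_succ, ← h1, pad_pos _ _ (m+1) (by omega) (by omega),
        pad_neg _ _ (m+2) (by omega), Nat.add_sub_cancel, hgcm, e_self hS hUne, mul_one]
    -- geometric construction of the loop
    have hpt : ∀ i : ℕ, ∃ y : X,
        ((1 ≤ i ∧ i ≤ m) → (y ∈ gc (i-1) • U ∧ y ∈ gc i • U)) ∧
        (¬(1 ≤ i ∧ i ≤ m) → y = u₀) := by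
      intro i
      by_cases hi : 1 ≤ i ∧ i ≤ m
      · have hts := htvS (i-1)
        rw [hS] at hts
        obtain ⟨z, hz1, hz2⟩ := Set.nonempty_iff_ne_empty.mpr hts
        refine ⟨gc (i-1) • z, fun _ => ⟨Set.smul_mem_smul_set hz2, ?_⟩, fun h => absurd hi h⟩
        have : gc i = gc (i-1) * tv (i-1) := by
          have := hstep (i-1) (by omega)
          rwa [show i - 1 + 1 = i from by omega] at this
        rw [this, ← smul_smul]
        exact Set.smul_mem_smul_set hz1
      · exact ⟨u₀, fun h => absurd h hi, fun _ => rfl⟩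
    choose pt hpt1 hpt2 using hpt
    have hpt0 : pt 0 = u₀ := hpt2 0 (by omega)
    have hptm : pt (m+1) = u₀ := hpt2 (m+1) (by omega)
    have hptmem : ∀ i ≤ m, pt i ∈ gc i • U ∧ pt (i+1) ∈ gc i • U := by
      intro i hi
      constructor
      · rcases Nat.eq_zero_or_pos i with h0 | h0
        · subst h0; rw [hpt0, hgc0, one_smul]; exact hu₀
        · exact (hpt1 i ⟨h0, hi⟩).2
      · rcases Nat.lt_or_ge i m with h0 | h0
        · have := (hpt1 (i+1) ⟨by omega, by omega⟩).1
          rwa [Nat.add_sub_cancel] at this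
        · have him : i = m := by omega
          subst him
          rw [hptm, hgcm, one_smul]
          exact hu₀
    have hp : ∀ i : ℕ, ∃ p : ℝ → X, Continuous p ∧ p 0 = pt i ∧ p 1 = pt (i+1) ∧
        (i ≤ m → ∀ x : ℝ, p x ∈ gc i • U) := by
      intro i
      by_cases hi : i ≤ m
      · obtain ⟨h1, h2⟩ := hptmem i hi
        obtain ⟨a, ha, hae⟩ := h1
        obtain ⟨b, hb, hbe⟩ := h2
        have hj : JoinedIn (gc i • U) (pt i) (pt (i+1)) := by
          rw [← hae, ← hbe]
          exact joinedIn_smul hcont ((hUj ha).symm.trans (hUj hb))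
        obtain ⟨P, hP⟩ := hj
        refine ⟨fun x => P (projIcc 0 1 zero_le_one x), P.continuous.comp continuous_projIcc,
          ?_, ?_, fun _ x => hP _⟩
        · show P (projIcc 0 1 zero_le_one 0) = pt i
          rw [Set.projIcc_left]; exact P.source
        · show P (projIcc 0 1 zero_le_one 1) = pt (i+1)
          rw [Set.projIcc_right]; exact P.target
      · have hptu : pt i = u₀ := hpt2 i (by omega)
        have hptu' : pt (i+1) = u₀ := hpt2 (i+1) (by omega)
        exact ⟨fun _ => u₀, continuous_const, hptu.symm, hptu'.symm, fun h => absurd h hi⟩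
    choose p hpc hp0 hp1 hpm using hp
    have hmatch : ∀ j < m, p j 1 = p (j+1) 0 := by
      intro j _
      rw [hp1, hp0]
    have hmatch' : ∀ j < m + 1, p j 1 = p (j+1) 0 := fun j _ => by rw [hp1, hp0]
    -- the loop as a path
    have hcatc : Continuous (cat X m p) := cat_continuous m p hpc hmatch
    have hγc : Continuous fun t : unitInterval => cat X m p ((m+1 : ℝ) * (t : ℝ)) :=
      hcatc.comp (continuous_const.mul continuous_subtype_val)
    set γpath : Path u₀ u₀ :=
      { toFun := fun t : unitInterval => cat X m p ((m+1 : ℝ) * (t : ℝ))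
        continuous_toFun := hγc
        source' := by
          simp only [Set.Icc.coe_zero, mul_zero]
          rw [cat_zero_eval, hp0, hpt0]
        target' := by
          simp only [Set.Icc.coe_one, mul_one]
          have := cat_eval (X := X) m p hmatch m le_rfl ((m : ℝ) + 1) (by linarith) le_rfl
          rw [this, show ((m:ℝ) + 1 - (m:ℝ)) = 1 by ring, hp1, hptm] } with hγpath
    obtain ⟨H⟩ := SimplyConnectedSpace.paths_homotopic γpath (Path.refl u₀)
    have hproj0 : projIcc (0:ℝ) 1 zero_le_one 0 = (0 : unitInterval) := by
      rw [Set.projIcc_left]; rfl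
    have hproj1 : projIcc (0:ℝ) 1 zero_le_one 1 = (1 : unitInterval) := by
      rw [Set.projIcc_right]; rfl
    set F : ℝ × ℝ → X :=
      fun z => H (projIcc 0 1 zero_le_one z.1, projIcc 0 1 zero_le_one z.2) with hF
    have hFc : Continuous F :=
      H.continuous.comp ((continuous_projIcc.comp continuous_fst).prodMk
        (continuous_projIcc.comp continuous_snd))
    have hFbot : ∀ x : ℝ, F (0, x) = γpath (projIcc 0 1 zero_le_one x) := by
      intro x
      show H (projIcc 0 1 zero_le_one 0, projIcc 0 1 zero_le_one x)
        = γpath (projIcc 0 1 zero_le_one x)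
      rw [hproj0]
      exact H.apply_zero _
    have hFtop : ∀ x : ℝ, F (1, x) = u₀ := by
      intro x
      show H (projIcc 0 1 zero_le_one 1, projIcc 0 1 zero_le_one x) = u₀
      rw [hproj1]
      have := H.apply_one (projIcc 0 1 zero_le_one x)
      simpa using this
    have hFleft : ∀ y : ℝ, F (y, 0) = u₀ := by
      intro y
      show H (projIcc 0 1 zero_le_one y, projIcc 0 1 zero_le_one 0) = u₀
      rw [hproj0]
      have h := H.eq_fst (projIcc 0 1 zero_le_one y)
        (show (0 : unitInterval) ∈ ({0, 1} : Set unitInterval) by norm_num)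
      rw [h]
      exact γpath.source
    have hFright : ∀ y : ℝ, F (y, 1) = u₀ := by
      intro y
      show H (projIcc 0 1 zero_le_one y, projIcc 0 1 zero_le_one 1) = u₀
      rw [hproj1]
      have h := H.eq_fst (projIcc 0 1 zero_le_one y)
        (show (1 : unitInterval) ∈ ({0, 1} : Set unitInterval) by norm_num)
      rw [h]
      exact γpath.target
    -- Lebesgue number for the homotopy square
    have hcov : (Set.Icc (0:ℝ) 1 ×ˢ Set.Icc (0:ℝ) 1) ⊆ ⋃ g : G, F ⁻¹' (g • U) := by
      intro z _
      have hz : F z ∈ Set.univ := Set.mem_univ _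
      rw [← hcover] at hz
      simpa using hz
    obtain ⟨δ, hδ, hball⟩ := lebesgue_number_lemma_of_metric (isCompact_Icc.prod isCompact_Icc)
      (fun g : G => (smul_isOpen hcont hUopen g).preimage hFc) hcov
    obtain ⟨n0, hn0⟩ := exists_nat_one_div_lt hδ
    set n := n0 + 1 with hn
    have hn1 : 1 ≤ n := by omega
    have hnR : (1 : ℝ) / n < δ := by
      rw [hn]
      push_cast
      exact hn0
    have hnpos : (0:ℝ) < n := by positivity
    have hsq : ∀ i j : ℕ, ∃ g : G, i < n → j < n → ∀ x y : ℝ,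
        (i:ℝ) ≤ x → x ≤ (i:ℝ)+1 → (j:ℝ) ≤ y → y ≤ (j:ℝ)+1 → F (y/n, x/n) ∈ g • U := by
      intro i j
      by_cases hij : i < n ∧ j < n
      · have hmemc : ((j:ℝ)/n, (i:ℝ)/n) ∈ Set.Icc (0:ℝ) 1 ×ˢ Set.Icc (0:ℝ) 1 := by
          constructor <;> constructor
          · positivity
          · rw [div_le_one hnpos]; exact_mod_cast Nat.le_of_lt hij.2
          · positivity
          · rw [div_le_one hnpos]; exact_mod_cast Nat.le_of_lt hij.1
        obtain ⟨g, hg⟩ := hball _ hmemc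
        refine ⟨g, fun _ _ x y hx1 hx2 hy1 hy2 => hg ?_⟩
        rw [Metric.mem_ball, Prod.dist_eq]
        have hd1 : dist (y/(n:ℝ)) ((j:ℝ)/n) ≤ 1/n := by
          rw [Real.dist_eq, ← sub_div, abs_div, abs_of_pos hnpos]
          gcongr
          rw [abs_le]
          constructor <;> linarith
        have hd2 : dist (x/(n:ℝ)) ((i:ℝ)/n) ≤ 1/n := by
          rw [Real.dist_eq, ← sub_div, abs_div, abs_of_pos hnpos]
          gcongr
          rw [abs_le]
          constructor <;> linarith
        calc dist (y/(n:ℝ)) ((j:ℝ)/n) ⊔ dist (x/(n:ℝ)) ((i:ℝ)/n) ≤ 1/n := sup_le hd1 hd2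
        _ < δ := hnR
      · exact ⟨1, fun h1 h2 => absurd ⟨h1, h2⟩ hij⟩
    choose sq hsqp using hsq
    -- the bottom edge function
    set f0 : ℝ → X := fun x => F (0, x) with hf0
    have hf0γ : ∀ x : ℝ, f0 x = γpath (projIcc 0 1 zero_le_one x) := hFbot
    have hf00 : f0 0 ∈ U := by
      rw [hf0γ, hproj0, γpath.source]
      exact hu₀
    have hf01 : f0 1 ∈ U := by
      rw [hf0γ, hproj1, γpath.target]
      exact hu₀
    have hbot : IsChain U f0 n (fun i => sq i 0) := by
      intro i hi x hx1 hx2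
      have h := hsqp i 0 hi (by omega) x 0 hx1 hx2 (by norm_num) (by norm_num)
      rw [zero_div] at h
      exact h
    have hgch : IsChain U f0 (m+1) gc := by
      intro i hi x hx1 hx2
      have hi' : i ≤ m := by omega
      have hx0 : (0:ℝ) ≤ x := le_trans (Nat.cast_nonneg i) hx1
      have hxm : x ≤ (m:ℝ) + 1 := by
        have : (i:ℝ) + 1 ≤ (m:ℝ) + 1 := by
          have : (i:ℝ) ≤ (m:ℝ) := by exact_mod_cast hi'
          linarith
        linarith
      have hm1R : (0:ℝ) < (m:ℝ) + 1 := by positivity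
      have hmemx : x / ((m:ℕ)+1 : ℕ) ∈ Set.Icc (0:ℝ) 1 := by
        push_cast
        constructor
        · positivity
        · rw [div_le_one hm1R]; linarith
      have hcast : ((((m:ℕ)+1 : ℕ)):ℝ) = (m:ℝ) + 1 := by push_cast; ring
      rw [hf0γ]
      rw [show projIcc 0 1 zero_le_one (x / (((m:ℕ)+1 : ℕ):ℝ)) = ⟨x / (((m:ℕ)+1:ℕ):ℝ), hmemx⟩
        from Set.projIcc_of_mem zero_le_one hmemx]
      show cat X m p ((m+1 : ℝ) * (x / (((m:ℕ)+1:ℕ):ℝ))) ∈ gc i • U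
      rw [hcast, mul_div_cancel₀ x (ne_of_gt hm1R)]
      rw [cat_eval (X := X) m p hmatch i hi' x hx1 hx2]
      exact hpm i hi' _
    -- word equalities between consecutive rows
    have hrow : ∀ j : ℕ, j + 1 < n →
        word U S (fun i => sq i j) n = word U S (fun i => sq i (j+1)) n := by
      intro j hj
      refine rows_eq hS (pad (fun i => sq i j) n) (pad (fun i => sq i (j+1)) n) (n+1)
        (fun i => F (((j:ℝ)+1)/n, (i:ℝ)/n)) ?_ ?_ ?_
      · rw [pad_neg _ _ 0 (by omega), pad_neg _ _ 0 (by omega)]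
      · rw [pad_neg _ _ (n+1) (by omega), pad_neg _ _ (n+1) (by omega)]
      · intro i hi
        have hin : i ≤ n := by omega
        have hmem1 : ∀ (r : ℕ), r < n → ((j:ℝ) ≤ (j:ℝ)+1 ∧ (j:ℝ)+1 ≤ (j:ℝ)+1) →
            True := fun _ _ _ => trivial
        have key : ∀ (jj : ℕ) (cJ : ℕ → G), cJ = (fun i => sq i jj) → jj < n →
            ((j:ℝ)+1 ≥ (jj:ℝ)) → ((j:ℝ)+1 ≤ (jj:ℝ)+1) →
            F (((j:ℝ)+1)/n, (i:ℝ)/n) ∈ pad cJ n i • U ∧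
            F (((j:ℝ)+1)/n, (i:ℝ)/n) ∈ pad cJ n (i+1) • U := by
          intro jj cJ hcJ hjjn hy1 hy2
          subst hcJ
          constructor
          · rcases Nat.eq_zero_or_pos i with h0 | h0
            · subst h0
              rw [pad_neg _ _ 0 (by omega), one_smul]
              rw [show ((0:ℕ):ℝ)/(n:ℝ) = 0 by simp, hFleft]
              exact hu₀
            · rw [pad_pos _ _ i h0 hin]
              refine hsqp (i-1) jj (by omega) hjjn (i:ℝ) ((j:ℝ)+1) ?_ ?_ hy1 hy2
              · rw [Nat.cast_sub h0]; push_cast; linarith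
              · rw [Nat.cast_sub h0]; push_cast; linarith
          · rcases Nat.lt_or_ge i n with h0 | h0
            · rw [pad_pos _ _ (i+1) (by omega) (by omega), Nat.add_sub_cancel]
              exact hsqp i jj h0 hjjn (i:ℝ) ((j:ℝ)+1) le_rfl (by linarith) hy1 hy2
            · have hieq : i = n := by omega
              subst hieq
              rw [pad_neg _ _ (n+1) (by omega), one_smul]
              rw [show ((n:ℕ):ℝ)/(n:ℝ) = 1 from div_self (ne_of_gt hnpos), hFright]
              exact hu₀
        obtain ⟨a1, a2⟩ := key j _ rfl (by omega) (by linarith) (by linarith)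
        obtain ⟨b1, b2⟩ := key (j+1) _ rfl (by omega) (by push_cast; linarith)
          (by push_cast; linarith)
        exact ⟨a1, a2, b1, b2⟩
    -- the top row is trivial
    have htop : word U S (fun i => sq i (n-1)) n = 1 := by
      have h1 : W U S (pad (fun i => sq i (n-1)) n) (n+1) = W U S (fun _ => 1) (n+1) := by
        refine rows_eq hS _ _ (n+1) (fun _ => u₀) ?_ ?_ ?_
        · rw [pad_neg _ _ 0 (by omega)]
        · rw [pad_neg _ _ (n+1) (by omega)]
        · intro i hi
          have hin : i ≤ n := by omega
          have hmemtop : ∀ r : ℕ, r < n → ((r:ℝ) ≤ (r:ℝ) ∧ True) → True := fun _ _ _ => trivial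
          have hsqtop : ∀ r : ℕ, r < n → u₀ ∈ sq r (n-1) • U := by
            intro r hr
            have := hsqp r (n-1) hr (by omega) ((r:ℝ)) ((n:ℝ)) le_rfl (by linarith)
              (by rw [Nat.cast_sub hn1]; push_cast; linarith)
              (by rw [Nat.cast_sub hn1]; push_cast; linarith)
            rwa [div_self (ne_of_gt hnpos), hFtop] at this
          refine ⟨?_, ?_, by rw [one_smul]; exact hu₀, by rw [one_smul]; exact hu₀⟩
          · rcases Nat.eq_zero_or_pos i with h0 | h0
            · subst h0; rw [pad_neg _ _ 0 (by omega), one_smul]; exact hu₀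
            · rw [pad_pos _ _ i h0 hin]; exact hsqtop (i-1) (by omega)
          · rcases Nat.lt_or_ge i n with h0 | h0
            · rw [pad_pos _ _ (i+1) (by omega) (by omega), Nat.add_sub_cancel]
              exact hsqtop i h0
            · have hieq : i = n := by omega
              subst hieq
              rw [pad_neg _ _ (n+1) (by omega), one_smul]; exact hu₀
      rw [word, h1, W_one hS hUne]
    -- induction from bottom to top
    have hbt : word U S (fun i => sq i 0) n = word U S (fun i => sq i (n-1)) n := by
      have haux : ∀ j : ℕ, j < n → word U S (fun i => sq i (n-1-j)) n
          = word U S (fun i => sq i (n-1)) n := by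
        intro j
        induction j with
        | zero => intro _; rfl
        | succ j ihj =>
          intro hjn
          have h1 : n - 1 - (j+1) + 1 = n - 1 - j := by omega
          have h2 := hrow (n-1-(j+1)) (by omega)
          rw [h1] at h2
          rw [h2]
          exact ihj (by omega)
      have := haux (n-1) (by omega)
      rwa [show n - 1 - (n-1) = 0 from by omega] at this
    -- comparing the bottom row with the chain of the loop
    have hmain : word U S gc (m+1) = word U S (fun i => sq i 0) n := by
      have hr1 : word U S gc (m+1) = word U S (fun i => gc (i / n)) ((m+1) * n) :=
        word_refine hS hUne gc (by omega) hn1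
      have hr2 : word U S (fun i => sq i 0) n
          = word U S (fun i => sq (i / (m+1)) 0) (n * (m+1)) :=
        word_refine hS hUne _ hn1 (by omega)
      have hc1 : IsChain U f0 ((m+1) * n) (fun i => gc (i / n)) := chain_refine hS hn1 hgch
      have hc2 : IsChain U f0 (n * (m+1)) (fun i => sq (i / (m+1)) 0) :=
        chain_refine hS (by omega) hbot
      have hmul : (m+1) * n = n * (m+1) := Nat.mul_comm _ _
      rw [hr1, hr2]
      rw [hmul] at hc1 ⊢
      exact chain_word_eq hS (Nat.one_le_iff_ne_zero.mpr (Nat.mul_ne_zero (by omega) (by omega))) hc1 hc2 hf00 hf01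
    -- conclusion
    have : qm U S w = 1 := by
      rw [hqmw, hmain, hbt, htop]
    rw [qm, QuotientGroup.mk'_apply] at this
    exact (QuotientGroup.eq_one_iff w).mp this

end

end Stmt1Aux

/-- If a group `G` acts on a simply connected topological space `X` by homeomorphisms, `U` is a
path-connected open subset whose `G`-translates cover `X`, and `S = {g | g • U ∩ U ≠ ∅}`, then the
canonical map from the free group on `S` to `G` is surjective with kernel the normal closure of
the relators `a_{s₁} a_{s₂} a_{s₃}⁻¹` for `s₁ s₂ = s₃` with `U ∩ s₁ • U ∩ s₃ • U ≠ ∅`. -/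
theorem stmt1 {G X : Type*} [Group G] [TopologicalSpace X] [MulAction G X]
    (hcont : ∀ g : G, Continuous fun x : X => g • x)
    (U : Set X) (hUopen : IsOpen U)
    (hcover : ⋃ g : G, g • U = Set.univ)
    (hX : SimplyConnectedSpace X) (hUpc : IsPathConnected U)
    (S : Set G) (hS : S = {g : G | (g • U) ∩ U ≠ ∅})
    (φ : FreeGroup S →* G) (hφ : φ = FreeGroup.lift (fun s : S => (s : G))) :
    Function.Surjective φ ∧
      φ.ker = Subgroup.normalClosure
        {w : FreeGroup S | ∃ s₁ s₂ s₃ : S,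
          U ∩ ((s₁ : G) • U) ∩ ((s₃ : G) • U) ≠ ∅ ∧
          (s₁ : G) * (s₂ : G) = (s₃ : G) ∧
          w = FreeGroup.of s₁ * FreeGroup.of s₂ * (FreeGroup.of s₃)⁻¹} := by
  classical
  obtain ⟨u₀, hu₀, hUj⟩ := hUpc
  haveI := hX
  have hrange : ∀ s : G, s ∈ S → s ∈ φ.range := by
    intro s hs
    exact ⟨FreeGroup.of ⟨s, hs⟩, by rw [hφ]; simp⟩
  constructor
  · -- surjectivity
    intro g
    obtain ⟨γ0⟩ := PathConnectedSpace.joined u₀ (g • u₀)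
    set f : ℝ → X := fun x => γ0 (Set.projIcc 0 1 zero_le_one x) with hf
    have hproj0 : Set.projIcc (0:ℝ) 1 zero_le_one 0 = (0 : unitInterval) := by
      rw [Set.projIcc_left]; rfl
    have hproj1 : Set.projIcc (0:ℝ) 1 zero_le_one 1 = (1 : unitInterval) := by
      rw [Set.projIcc_right]; rfl
    have hfc : Continuous f := γ0.continuous.comp continuous_projIcc
    have hcov : Set.Icc (0:ℝ) 1 ⊆ ⋃ h : G, f ⁻¹' (h • U) := by
      intro x _
      have hx : f x ∈ Set.univ := Set.mem_univ _
      rw [← hcover] at hx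
      simpa using hx
    obtain ⟨δ, hδ, hball⟩ := lebesgue_number_lemma_of_metric isCompact_Icc
      (fun h : G => (Stmt1Aux.smul_isOpen hcont hUopen h).preimage hfc) hcov
    obtain ⟨n0, hn0⟩ := exists_nat_one_div_lt hδ
    set n := n0 + 1 with hn
    have hn1 : 1 ≤ n := by omega
    have hnpos : (0:ℝ) < n := by positivity
    have hnR : (1 : ℝ) / n < δ := by
      rw [hn]
      push_cast
      exact hn0
    have hchain : ∀ i : ℕ, ∃ h : G, i < n →
        ∀ x : ℝ, (i:ℝ) ≤ x → x ≤ (i:ℝ)+1 → f (x / n) ∈ h • U := by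
      intro i
      by_cases hi : i < n
      · have hmemc : (i:ℝ)/n ∈ Set.Icc (0:ℝ) 1 := by
          refine Set.mem_Icc.mpr ⟨by positivity, ?_⟩
          rw [div_le_one hnpos]
          exact_mod_cast Nat.le_of_lt hi
        obtain ⟨h, hh⟩ := hball _ hmemc
        refine ⟨h, fun _ x hx1 hx2 => hh ?_⟩
        rw [Metric.mem_ball, Real.dist_eq, ← sub_div, abs_div, abs_of_pos hnpos]
        calc |x - (i:ℝ)| / n ≤ 1 / n := by
              gcongr
              rw [abs_le]
              constructor <;> linarith
        _ < δ := hnR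
      · exact ⟨1, fun h => absurd h hi⟩
    choose c hc using hchain
    have hf0 : f 0 = u₀ := by rw [hf]; simp only; rw [hproj0, γ0.source]
    have hf1 : f 1 = g • u₀ := by rw [hf]; simp only; rw [hproj1, γ0.target]
    have hSmem : ∀ {p q : G} {x : X}, x ∈ p • U → x ∈ q • U → p⁻¹ * q ∈ S :=
      fun h1 h2 => Stmt1Aux.mem_S hS h1 h2
    have hmem : ∀ i, i < n → c i ∈ φ.range := by
      intro i
      induction i with
      | zero =>
        intro h0
        have h1 : f ((0:ℝ)/n) ∈ c 0 • U := hc 0 h0 0 (by norm_num) (by norm_num)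
        rw [zero_div, hf0] at h1
        have h2 : (1:G)⁻¹ * c 0 ∈ S := hSmem (by rw [one_smul]; exact hu₀) h1
        have := hrange _ h2
        simpa using this
      | succ i ih =>
        intro hsucc
        have hi : i < n := by omega
        have h1 : f ((↑(i+1):ℝ)/n) ∈ c i • U :=
          hc i hi (↑(i+1)) (by push_cast; linarith) (by push_cast; linarith)
        have h2 : f ((↑(i+1):ℝ)/n) ∈ c (i+1) • U :=
          hc (i+1) hsucc (↑(i+1)) le_rfl (by linarith)
        have h3 : (c i)⁻¹ * c (i+1) ∈ S := hSmem h1 h2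
        have := mul_mem (ih hi) (hrange _ h3)
        simpa using this
    have h1 : f ((n:ℝ)/n) ∈ c (n-1) • U := by
      refine hc (n-1) (by omega) (n:ℝ) ?_ ?_
      · rw [Nat.cast_sub hn1]; push_cast; linarith
      · rw [Nat.cast_sub hn1]; push_cast; linarith
    rw [div_self (ne_of_gt hnpos), hf1] at h1
    have h2 : g • u₀ ∈ g • U := Set.smul_mem_smul_set hu₀
    have h3 : (c (n-1))⁻¹ * g ∈ S := hSmem h1 h2
    have := mul_mem (hmem (n-1) (by omega)) (hrange _ h3)
    simpa using this
  · -- the kernel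
    have hset : {w : FreeGroup S | ∃ s₁ s₂ s₃ : S,
          U ∩ ((s₁ : G) • U) ∩ ((s₃ : G) • U) ≠ ∅ ∧
          (s₁ : G) * (s₂ : G) = (s₃ : G) ∧
          w = FreeGroup.of s₁ * FreeGroup.of s₂ * (FreeGroup.of s₃)⁻¹}
        = Stmt1Aux.Rel U S := rfl
    rw [hset]
    refine le_antisymm ?_ ?_
    · intro w hw
      have hw1 : φ w = 1 := hw
      rw [hφ] at hw1
      exact Stmt1Aux.ker_le hcont hUopen hcover hX ⟨u₀, hu₀, hUj⟩ hS hw1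
    · refine Subgroup.normalClosure_le_normal ?_
      rintro w ⟨s1, s2, s3, -, hmul, rfl⟩
      have : φ (FreeGroup.of s1 * FreeGroup.of s2 * (FreeGroup.of s3)⁻¹) = 1 := by
        rw [hφ]
        simp [hmul]
      exact this
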